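/- A family P₁,…,Pₙ of pure states on ℂ^d is antidistinguishable if and only if there exist pure states P_j^k on ℂ^d and real numbers α_j^k with 0 ≤ α_j^k ≤ 1, for j ∈ {1,…,n} and k ∈ {2,…,d}, such that: (1) P_j + ∑_{k=2}^d P_j^k = I for every j; (2) ∑_{j=1}^n ∑_{k=2}^d α_j^k P_j^k = I; and (3) ∑_{i=1}^n ∑_{k=2}^d α_j^k tr(P_i P_j^k) ≠ 0 for every j. -/

import Mathlib

open Matrix BigOperators
open scoped ComplexOrder

/-- A state (density matrix) on ℂ^d: positive semidefinite (hence Hermitian) with trace 1. -/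
def IsState {d : ℕ} (ρ : Matrix (Fin d) (Fin d) ℂ) : Prop :=
  ρ.PosSemidef ∧ ρ.trace = 1

/-- A POVM with outcomes 1,…,n. -/
def IsPOVM {d n : ℕ} (M : Fin n → Matrix (Fin d) (Fin d) ℂ) : Prop :=
  (∀ j, (M j).PosSemidef) ∧ ∑ j, M j = 1

/-- States are distinguishable if some POVM identifies each with certainty. -/
def Distinguishable {d n : ℕ} (ρ : Fin n → Matrix (Fin d) (Fin d) ℂ) : Prop :=
  ∃ M : Fin n → Matrix (Fin d) (Fin d) ℂ, IsPOVM M ∧ ∀ j, (ρ j * M j).trace = 1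

/-- States are antidistinguishable if some POVM excludes each with certainty,
with every outcome occurring for at least one state. -/
def Antidistinguishable {d n : ℕ} (ρ : Fin n → Matrix (Fin d) (Fin d) ℂ) : Prop :=
  ∃ M : Fin n → Matrix (Fin d) (Fin d) ℂ, IsPOVM M ∧
    ∀ j, (ρ j * M j).trace = 0 ∧ ∑ k, (ρ k * M j).trace ≠ 0

/-- A pure state on ℂ^d: a rank-one orthogonal projection. -/
def IsPureState {d : ℕ} (P : Matrix (Fin d) (Fin d) ℂ) : Prop :=
  P.IsHermitian ∧ P * P = P ∧ P.trace = 1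


theorem posSemidef_iff_eq_transpose_mul_self {d : ℕ} {A : Matrix (Fin d) (Fin d) ℂ} :
    A.PosSemidef ↔ ∃ B : Matrix (Fin d) (Fin d) ℂ, A = Bᴴ * B := by
  classical
  open scoped MatrixOrder Matrix.Norms.L2Operator in
  refine ⟨fun hA => ?_, fun ⟨B, hB⟩ => hB ▸ posSemidef_conjTranspose_mul_self B⟩
  open scoped MatrixOrder Matrix.Norms.L2Operator in
  obtain ⟨B, hB⟩ := CStarAlgebra.nonneg_iff_eq_star_mul_self.mp hA.nonneg
  exact ⟨B, hB⟩

section Helpers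

variable {d : ℕ}

private lemma psd_trace_nonneg {A : Matrix (Fin d) (Fin d) ℂ} (hA : A.PosSemidef) :
    0 ≤ A.trace := by
  obtain ⟨B, rfl⟩ := posSemidef_iff_eq_transpose_mul_self.mp hA
  rw [Matrix.trace]
  refine Finset.sum_nonneg fun i _ => ?_
  simp only [diag_apply, mul_apply, conjTranspose_apply]
  exact Finset.sum_nonneg fun j _ => star_mul_self_nonneg _

private lemma psd_trace_zero {A : Matrix (Fin d) (Fin d) ℂ} (hA : A.PosSemidef)
    (h : A.trace = 0) : A = 0 := by
  obtain ⟨B, rfl⟩ := posSemidef_iff_eq_transpose_mul_self.mp hA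
  suffices hB : B = 0 by simp [hB]
  have h' : ∀ i ∈ Finset.univ, (Bᴴ * B) i i = 0 := by
    rw [Matrix.trace] at h
    intro i _
    refine (Finset.sum_eq_zero_iff_of_nonneg fun i _ => ?_).mp h i (Finset.mem_univ i)
    simp only [diag_apply, mul_apply, conjTranspose_apply]
    exact Finset.sum_nonneg fun j _ => star_mul_self_nonneg _
  ext j i
  have hii := h' i (Finset.mem_univ i)
  simp only [mul_apply, conjTranspose_apply] at hii
  have h2 : ∀ j ∈ Finset.univ, star (B j i) * B j i = 0 :=
    (Finset.sum_eq_zero_iff_of_nonneg fun j _ => star_mul_self_nonneg _).mp hii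
  have := h2 j (Finset.mem_univ j)
  simpa [mul_self_eq_zero, star_eq_zero, mul_eq_zero] using this

private lemma psd_trace_mul_nonneg {A B : Matrix (Fin d) (Fin d) ℂ} (hA : A.PosSemidef)
    (hB : B.PosSemidef) : 0 ≤ (A * B).trace := by
  obtain ⟨C, rfl⟩ := posSemidef_iff_eq_transpose_mul_self.mp hB
  rw [← mul_assoc, Matrix.trace_mul_cycle]
  exact psd_trace_nonneg (hA.mul_mul_conjTranspose_same C)

private lemma psd_mul_eq_zero {A B : Matrix (Fin d) (Fin d) ℂ} (hA : A.PosSemidef)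
    (hB : B.PosSemidef) (h : (A * B).trace = 0) : A * B = 0 := by
  obtain ⟨D, rfl⟩ := posSemidef_iff_eq_transpose_mul_self.mp hA
  obtain ⟨C, rfl⟩ := posSemidef_iff_eq_transpose_mul_self.mp hB
  have htr : ((D * Cᴴ)ᴴ * (D * Cᴴ)).trace = 0 := by
    rw [← h]
    rw [conjTranspose_mul, conjTranspose_conjTranspose, Matrix.trace_mul_comm,
      show Dᴴ * D * (Cᴴ * C) = Dᴴ * ((D * Cᴴ) * C) by noncomm_ring,
      Matrix.trace_mul_comm (Dᴴ), show D * Cᴴ * C * Dᴴ = D * Cᴴ * (C * Dᴴ) by noncomm_ring]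
  have key : D * Cᴴ = 0 := conjTranspose_mul_self_eq_zero.mp
    (psd_trace_zero (posSemidef_conjTranspose_mul_self _) htr)
  calc Dᴴ * D * (Cᴴ * C) = Dᴴ * (D * Cᴴ) * C := by noncomm_ring
    _ = 0 := by rw [key]; simp

private lemma pure_psd {P : Matrix (Fin d) (Fin d) ℂ} (hP : IsPureState P) : P.PosSemidef := by
  have : P = Pᴴ * P := by rw [hP.1]; exact hP.2.1.symm
  rw [this]; exact posSemidef_conjTranspose_mul_self P

private lemma herm_proj_psd {P : Matrix (Fin d) (Fin d) ℂ} (h1 : P.IsHermitian)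
    (h2 : P * P = P) : P.PosSemidef := by
  have : P = Pᴴ * P := by rw [h1]; exact h2.symm
  rw [this]; exact posSemidef_conjTranspose_mul_self P

private lemma psd_sum {ι : Type*} (s : Finset ι) (f : ι → Matrix (Fin d) (Fin d) ℂ)
    (h : ∀ i ∈ s, (f i).PosSemidef) : (∑ i ∈ s, f i).PosSemidef := by
  classical
  induction s using Finset.induction with
  | empty => simpa using Matrix.PosSemidef.zero
  | insert _ _ hx ih =>
    rw [Finset.sum_insert hx]
    exact ((h _ (Finset.mem_insert_self _ _)).add
      (ih fun i hi => h i (Finset.mem_insert_of_mem hi)))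

private lemma psd_smul {A : Matrix (Fin d) (Fin d) ℂ} (hA : A.PosSemidef) {c : ℝ}
    (hc : 0 ≤ c) : ((c : ℂ) • A).PosSemidef := by
  refine Matrix.PosSemidef.of_dotProduct_mulVec_nonneg ?_ ?_
  · unfold Matrix.IsHermitian
    rw [conjTranspose_smul, hA.1]
    norm_num
  · intro x
    rw [smul_mulVec, dotProduct_smul]
    have := hA.dotProduct_mulVec_nonneg x
    rw [smul_eq_mul]
    exact mul_nonneg (by exact_mod_cast Complex.zero_le_real.mpr hc) this

private lemma vecMulVec_herm (v : Fin d → ℂ) : (vecMulVec v (star v)).IsHermitian := by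
  ext a b
  simp [Matrix.IsHermitian, vecMulVec_apply, conjTranspose_apply, mul_comm]

private lemma vecMulVec_mul_vecMulVec (u v w x : Fin d → ℂ) :
    vecMulVec u (star v) * vecMulVec w (star x)
      = (star v ⬝ᵥ w) • vecMulVec u (star x) := by
  ext a b
  simp only [mul_apply, vecMulVec_apply, Matrix.smul_apply, dotProduct, smul_eq_mul, Pi.star_apply,
    Finset.sum_mul, Finset.mul_sum]
  apply Finset.sum_congr rfl
  intro c _
  ring

private lemma vecMulVec_trace (u v : Fin d → ℂ) :
    (vecMulVec u (star v)).trace = star v ⬝ᵥ u := by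
  simp only [Matrix.trace, diag_apply, vecMulVec_apply, dotProduct, Pi.star_apply]
  apply Finset.sum_congr rfl; intro c _; ring

private lemma vecMulVec_pure {v : Fin d → ℂ} (hv : star v ⬝ᵥ v = 1) :
    IsPureState (vecMulVec v (star v)) := by
  refine ⟨vecMulVec_herm v, ?_, ?_⟩
  · rw [vecMulVec_mul_vecMulVec, hv, one_smul]
  · rw [vecMulVec_trace, hv]

private lemma unitary_diag_decomp (U : Matrix (Fin d) (Fin d) ℂ) (f : Fin d → ℝ) :
    U * Matrix.diagonal (RCLike.ofReal ∘ f) * Uᴴ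
      = ∑ i, (f i : ℂ) • vecMulVec (fun a => U a i) (star fun b => U b i) := by
  ext a b
  have lhs : (U * Matrix.diagonal (RCLike.ofReal ∘ f) * Uᴴ : Matrix (Fin d) (Fin d) ℂ) a b
      = ∑ i, U a i * (f i : ℂ) * star (U b i) := by
    simp only [mul_apply, conjTranspose_apply]
    apply Finset.sum_congr rfl
    intro i _
    congr 1
    rw [Finset.sum_eq_single i]
    · simp
    · intro c _ hc; simp [Matrix.diagonal_apply_ne _ hc]
    · simp
  rw [lhs]
  simp only [Matrix.sum_apply, Matrix.smul_apply, vecMulVec_apply, smul_eq_mul, Pi.star_apply]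
  apply Finset.sum_congr rfl
  intro i _
  ring

private lemma mul_vecMulVec (A : Matrix (Fin d) (Fin d) ℂ) (v w : Fin d → ℂ) :
    A * vecMulVec v (star w) = vecMulVec (A *ᵥ v) (star w) := by
  ext a b
  simp only [mul_apply, vecMulVec_apply, mulVec, dotProduct, Finset.sum_mul, Pi.star_apply]
  exact Finset.sum_congr rfl fun c _ => by ring

private lemma vecMulVec_mul (A : Matrix (Fin d) (Fin d) ℂ) (hA : A.IsHermitian)
    (v w : Fin d → ℂ) :
    vecMulVec v (star w) * A = vecMulVec v (star (A *ᵥ w)) := by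
  ext a b
  simp only [mul_apply, vecMulVec_apply, mulVec, dotProduct, Finset.mul_sum, Pi.star_apply,
    star_sum, star_mul']
  apply Finset.sum_congr rfl
  intro c _
  have hc : star (A b c) = A c b := by conv_rhs => rw [← hA, conjTranspose_apply]
  rw [hc]
  ring

end Helpers

private lemma forward_decomp {m : ℕ} {P M : Matrix (Fin (m+1)) (Fin (m+1)) ℂ}
    (hP : IsPureState P) (hM : M.PosSemidef) (hM1 : (1 - M).PosSemidef)
    (htr : (P * M).trace = 0) :
    ∃ (Q : Fin m → Matrix (Fin (m+1)) (Fin (m+1)) ℂ) (α : Fin m → ℝ),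
      (∀ k, IsPureState (Q k)) ∧ (∀ k, 0 ≤ α k ∧ α k ≤ 1) ∧
      (P + ∑ k, Q k = 1) ∧ (∑ k, (α k : ℂ) • Q k = M) := by
  have hPM : P * M = 0 := psd_mul_eq_zero (pure_psd hP) hM htr
  have hMP : M * P = 0 := by
    have := psd_mul_eq_zero hM (pure_psd hP) (by rw [Matrix.trace_mul_comm]; exact htr)
    exact this
  set A : Matrix (Fin (m+1)) (Fin (m+1)) ℂ := M + (2:ℂ) • P with hAdef
  have hA : A.IsHermitian := by
    unfold Matrix.IsHermitian
    rw [hAdef, conjTranspose_add, conjTranspose_smul, hM.1, hP.1]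
    norm_num
  set U : Matrix (Fin (m+1)) (Fin (m+1)) ℂ := (hA.eigenvectorUnitary : Matrix (Fin (m+1)) (Fin (m+1)) ℂ) with hUdef
  set lam : Fin (m+1) → ℝ := hA.eigenvalues with hlamdef
  have hUU : Uᴴ * U = 1 := by
    rw [← Matrix.star_eq_conjTranspose]
    exact Unitary.coe_star_mul_self hA.eigenvectorUnitary
  have hUU' : U * Uᴴ = 1 := by
    rw [← Matrix.star_eq_conjTranspose]
    exact Unitary.coe_mul_star_self hA.eigenvectorUnitary
  have hspec : A = U * Matrix.diagonal (RCLike.ofReal ∘ lam) * Uᴴ := by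
    rw [← Matrix.star_eq_conjTranspose]
    exact hA.spectral_theorem
  set u : Fin (m+1) → Fin (m+1) → ℂ := fun i => fun a => U a i with hudef
  set Q' : Fin (m+1) → Matrix (Fin (m+1)) (Fin (m+1)) ℂ :=
    fun i => vecMulVec (u i) (star (u i)) with hQ'def
  have horth : ∀ i i', star (u i) ⬝ᵥ u i' = (1 : Matrix (Fin (m+1)) (Fin (m+1)) ℂ) i i' := by
    intro i i'
    rw [← hUU]
    simp [mul_apply, dotProduct, conjTranspose_apply, hudef]
  have hunit : ∀ i, star (u i) ⬝ᵥ u i = 1 := fun i => by rw [horth, one_apply_eq]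
  have hQpure : ∀ i, IsPureState (Q' i) := fun i => vecMulVec_pure (hunit i)
  have hcomplete : ∑ i, Q' i = 1 := by
    ext a b
    rw [← hUU']
    simp only [Matrix.sum_apply, hQ'def, vecMulVec_apply, mul_apply, conjTranspose_apply,
      Pi.star_apply, hudef]
  have hdecomp : A = ∑ i, (lam i : ℂ) • Q' i := by
    rw [hspec, unitary_diag_decomp]
  have heig : ∀ i, A *ᵥ u i = (lam i : ℂ) • u i := by
    intro i
    have hAU : A * U = U * Matrix.diagonal (RCLike.ofReal ∘ lam) := by
      rw [hspec, mul_assoc, hUU, mul_one]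
    funext a
    have h1 : (A *ᵥ u i) a = (A * U) a i := by simp [mulVec, dotProduct, mul_apply, hudef]
    rw [h1, hAU, mul_diagonal]
    simp [hudef, mul_comm]
  have hPA : P * A = (2:ℂ) • P := by
    rw [hAdef, mul_add, hPM, zero_add, mul_smul_comm, hP.2.1]
  have hAP : A * P = (2:ℂ) • P := by
    rw [hAdef, add_mul, hMP, zero_add, smul_mul_assoc, hP.2.1]
  obtain ⟨i₀, hi₀⟩ : ∃ i, lam i = 2 := by
    set X := Uᴴ * P with hX
    have hDX : Matrix.diagonal (RCLike.ofReal ∘ lam) * X = (2:ℂ) • X := by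
      have h1 : Uᴴ * (A * P) = Uᴴ * ((2:ℂ) • P) := by rw [hAP]
      rw [hspec] at h1
      rw [show Uᴴ * (U * Matrix.diagonal (RCLike.ofReal ∘ lam) * Uᴴ * P)
          = (Uᴴ * U) * (Matrix.diagonal (RCLike.ofReal ∘ lam) * (Uᴴ * P)) by noncomm_ring,
        hUU, one_mul, mul_smul_comm] at h1
      rw [hX, h1]
    have hXne : X ≠ 0 := by
      intro h0
      have hPz : P = 0 := by
        have : (U * Uᴴ) * P = U * X := by rw [hX]; noncomm_ring
        rw [hUU', one_mul, h0, mul_zero] at this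
        exact this
      have h1 : (0 : Matrix (Fin (m+1)) (Fin (m+1)) ℂ).trace = 1 := hPz ▸ hP.2.2
      rw [Matrix.trace_zero] at h1
      exact one_ne_zero h1.symm
    have hab : ∃ a b, X a b ≠ 0 := by
      by_contra h
      push_neg at h
      exact hXne (Matrix.ext fun a b => h a b)
    obtain ⟨a, b, hab⟩ := hab
    refine ⟨a, ?_⟩
    have h1 : (lam a : ℂ) * X a b = 2 * X a b := by
      have := congrFun (congrFun hDX a) b
      simpa [Matrix.diagonal_mul, Matrix.smul_apply, smul_eq_mul] using this
    have : (lam a : ℂ) = 2 := mul_right_cancel₀ hab h1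
    exact_mod_cast this
  have hQ2 : ∀ i, lam i = 2 → Q' i = P := by
    intro i h2
    have heqA := heig i
    rw [h2, hAdef] at heqA
    have heq : M *ᵥ u i + (2:ℂ) • (P *ᵥ u i) = (2:ℂ) • u i := by
      rw [add_mulVec, smul_mulVec] at heqA
      convert heqA using 2
      norm_num
    set w := u i - P *ᵥ u i with hw
    have hMw : M *ᵥ w = (2:ℂ) • w := by
      have h0 : M *ᵥ (P *ᵥ u i) = 0 := by rw [mulVec_mulVec, hMP, zero_mulVec]
      have hMu : M *ᵥ u i = (2:ℂ) • u i - (2:ℂ) • (P *ᵥ u i) := by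
        rw [eq_sub_iff_add_eq]; exact heq
      rw [hw, mulVec_sub, h0, sub_zero, hMu, ← smul_sub]
    have hs0 : star w ⬝ᵥ w = 0 := by
      have h1 : 0 ≤ star w ⬝ᵥ ((1 - M) *ᵥ w) := hM1.dotProduct_mulVec_nonneg w
      have h2' : star w ⬝ᵥ ((1 - M) *ᵥ w) = - (star w ⬝ᵥ w) := by
        rw [sub_mulVec, one_mulVec, dotProduct_sub, hMw, dotProduct_smul, smul_eq_mul]
        ring
      rw [h2'] at h1
      exact le_antisymm (neg_nonneg.mp h1) (dotProduct_star_self_nonneg w)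
    have hwz : w = 0 := dotProduct_star_self_eq_zero.mp hs0
    have hPu : P *ᵥ u i = u i := by
      have := sub_eq_zero.mp hwz
      exact this.symm
    have hPQ : P * Q' i = Q' i := by
      rw [hQ'def]
      simp only
      rw [_root_.mul_vecMulVec, hPu]
    have hQP : Q' i * P = Q' i := by
      rw [hQ'def]
      simp only
      rw [vecMulVec_mul P hP.1, hPu]
    have hT : (P - Q' i) * (P - Q' i) = P - Q' i := by
      rw [sub_mul, mul_sub, mul_sub, hP.2.1, hPQ, hQP, (hQpure i).2.1]
      simp
    have hTtr : (P - Q' i).trace = 0 := by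
      rw [trace_sub, hP.2.2, (hQpure i).2.2, sub_self]
    have hzero := psd_trace_zero (herm_proj_psd (hP.1.sub (hQpure i).1) hT) hTtr
    exact (sub_eq_zero.mp hzero).symm
  have huniq : ∀ i, i ≠ i₀ → lam i ≠ 2 := by
    intro i hne h2
    have hQi : Q' i = P := hQ2 i h2
    have hQi₀ : Q' i₀ = P := hQ2 i₀ hi₀
    have hzero : Q' i * Q' i₀ = 0 := by
      rw [hQ'def]
      simp only
      rw [_root_.vecMulVec_mul_vecMulVec, horth, Matrix.one_apply_ne hne, zero_smul]
    rw [hQi, hQi₀, hP.2.1] at hzero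
    have htr1 := hP.2.2
    rw [hzero, Matrix.trace_zero] at htr1
    exact one_ne_zero htr1.symm
  have hbound : ∀ i, i ≠ i₀ → 0 ≤ lam i ∧ lam i ≤ 1 := by
    intro i hne
    have hl2 : lam i ≠ 2 := huniq i hne
    have hPu : P *ᵥ u i = 0 := by
      have h1 : P *ᵥ (A *ᵥ u i) = (2:ℂ) • (P *ᵥ u i) := by
        rw [mulVec_mulVec, hPA, smul_mulVec]
      rw [heig i, mulVec_smul] at h1
      have h2 : ((lam i : ℂ) - 2) • (P *ᵥ u i) = 0 := by
        rw [sub_smul, h1, sub_self]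
      rcases smul_eq_zero.mp h2 with h | h
      · exfalso
        apply hl2
        have h3 : (lam i : ℂ) = 2 := by
          have := sub_eq_zero.mp h
          exact this
        exact_mod_cast h3
      · exact h
    have hMu : M *ᵥ u i = (lam i : ℂ) • u i := by
      have h4 := heig i
      rw [hAdef, add_mulVec, smul_mulVec, hPu, smul_zero, add_zero] at h4
      exact h4
    have e1 : star (u i) ⬝ᵥ (M *ᵥ u i) = (lam i : ℂ) := by
      rw [hMu, dotProduct_smul, hunit, smul_eq_mul, mul_one]
    constructor
    · have h5 := hM.dotProduct_mulVec_nonneg (u i)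
      rw [e1] at h5
      exact_mod_cast h5
    · have h1 := hM1.dotProduct_mulVec_nonneg (u i)
      have e2 : star (u i) ⬝ᵥ ((1 - M) *ᵥ u i) = 1 - (lam i : ℂ) := by
        rw [sub_mulVec, one_mulVec, dotProduct_sub, e1, hunit]
      rw [e2] at h1
      have h6 : (lam i : ℂ) ≤ 1 := sub_nonneg.mp h1
      exact_mod_cast h6
  refine ⟨fun k => Q' (i₀.succAbove k), fun k => lam (i₀.succAbove k),
    fun k => hQpure _, fun k => hbound _ (Fin.succAbove_ne i₀ k), ?_, ?_⟩
  · rw [← hcomplete, Fin.sum_univ_succAbove Q' i₀, hQ2 i₀ hi₀]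
  · have h1 := hdecomp
    rw [Fin.sum_univ_succAbove (fun i => (lam i:ℂ) • Q' i) i₀, hQ2 i₀ hi₀, hi₀, hAdef] at h1
    have hc : ((2:ℝ):ℂ) = (2:ℂ) := by norm_num
    rw [hc] at h1
    have h2 : (∑ k, (lam (i₀.succAbove k) : ℂ) • Q' (i₀.succAbove k)) + (2:ℂ) • P
        = M + (2:ℂ) • P := by
      rw [add_comm _ ((2:ℂ) • P), ← h1]
    exact add_right_cancel h2

/-- pure states P₁,…,Pₙ are antidistinguishable iff there exist, for
each j, d−1 further pure states P_j^k (k ∈ {2,…,d}, here indexed by Fin (d−1)) and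
coefficients 0 ≤ α_j^k ≤ 1 such that
(1) P_j + ∑_k P_j^k = I for every j,
(2) ∑_j ∑_k α_j^k P_j^k = I, and
(3) ∑_i ∑_k α_j^k tr(P_i P_j^k) ≠ 0 for every j. -/
theorem antidistinguishable_iff_chart {d n : ℕ}
    (P : Fin n → Matrix (Fin d) (Fin d) ℂ) (hP : ∀ j, IsPureState (P j)) :
    Antidistinguishable P ↔
      ∃ (Q : Fin n → Fin (d - 1) → Matrix (Fin d) (Fin d) ℂ) (α : Fin n → Fin (d - 1) → ℝ),
        (∀ j k, IsPureState (Q j k)) ∧ (∀ j k, 0 ≤ α j k ∧ α j k ≤ 1) ∧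
        (∀ j, P j + ∑ k, Q j k = 1) ∧
        (∑ j, ∑ k, (α j k : ℂ) • Q j k = 1) ∧
        (∀ j, ∑ i, ∑ k, (α j k : ℂ) * (P i * Q j k).trace ≠ 0) := by
  rcases Nat.eq_zero_or_pos d with hd | hd
  · subst hd
    rcases Nat.eq_zero_or_pos n with hn | hn
    · subst hn
      apply iff_of_true
      · exact ⟨fun _ => 0, ⟨fun j => j.elim0, Subsingleton.elim _ _⟩, fun j => j.elim0⟩
      · exact ⟨fun j _ => 0, fun j _ => 0, fun j => j.elim0, fun j => j.elim0, fun j => j.elim0,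
          Subsingleton.elim _ _, fun j => j.elim0⟩
    · exfalso
      have h1 := (hP ⟨0, hn⟩).2.2
      rw [show (P ⟨0, hn⟩).trace = 0 by simp [Matrix.trace]] at h1
      exact one_ne_zero h1.symm
  obtain ⟨m, rfl⟩ : ∃ m, d = m + 1 := ⟨d - 1, (Nat.succ_pred_eq_of_pos hd).symm⟩
  constructor
  · rintro ⟨M, ⟨hMpsd, hMsum⟩, hM⟩
    have key : ∀ j, ∃ (Q : Fin m → Matrix (Fin (m+1)) (Fin (m+1)) ℂ) (α : Fin m → ℝ),
        (∀ k, IsPureState (Q k)) ∧ (∀ k, 0 ≤ α k ∧ α k ≤ 1) ∧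
        (P j + ∑ k, Q k = 1) ∧ (∑ k, (α k : ℂ) • Q k = M j) := by
      intro j
      have h1M : ((1 : Matrix (Fin (m+1)) (Fin (m+1)) ℂ) - M j).PosSemidef := by
        have he : (1 : Matrix (Fin (m+1)) (Fin (m+1)) ℂ) - M j
            = ∑ i ∈ Finset.univ.erase j, M i := by
          rw [← hMsum, ← Finset.add_sum_erase _ M (Finset.mem_univ j), add_sub_cancel_left]
        rw [he]
        exact psd_sum _ _ fun i _ => hMpsd i
      exact forward_decomp (hP j) (hMpsd j) h1M (hM j).1
    choose Q α hpure hb h1 h2 using key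
    refine ⟨Q, α, fun j => hpure j, fun j => hb j, h1, ?_, ?_⟩
    · exact (Finset.sum_congr rfl fun j _ => h2 j).trans hMsum
    · intro j
      have hlin : ∀ i, ∑ k, (α j k : ℂ) * (P i * Q j k).trace = (P i * M j).trace := by
        intro i
        rw [← h2 j, Matrix.mul_sum, trace_sum]
        apply Finset.sum_congr rfl
        intro k _
        rw [mul_smul_comm, trace_smul, smul_eq_mul]
      exact fun h0 => (hM j).2 ((Finset.sum_congr rfl fun i _ => hlin i).symm.trans h0)
  · rintro ⟨Q, α, hpure, hb, h1, h2, h3⟩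
    refine ⟨fun j => ∑ k, (α j k : ℂ) • Q j k,
      ⟨fun j => psd_sum _ _ fun k _ => psd_smul (pure_psd (hpure j k)) (hb j k).1, h2⟩,
      fun j => ⟨?_, ?_⟩⟩
    · have horth0 : ∀ k, (P j * Q j k).trace = 0 := by
        have hsum : ∑ k, (P j * Q j k).trace = 0 := by
          rw [← trace_sum, ← Matrix.mul_sum]
          have hs : (∑ k, Q j k) = 1 - P j := eq_sub_of_add_eq' (h1 j)
          rw [hs, mul_sub, mul_one, (hP j).2.1, sub_self, trace_zero]
        intro k
        exact (Finset.sum_eq_zero_iff_of_nonneg fun k _ =>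
          psd_trace_mul_nonneg (pure_psd (hP j)) (pure_psd (hpure j k))).mp hsum k
          (Finset.mem_univ k)
      rw [Matrix.mul_sum, trace_sum]
      apply Finset.sum_eq_zero
      intro k _
      rw [mul_smul_comm, trace_smul, horth0 k, smul_zero]
    · have hlin : ∀ i, (P i * (∑ k, (α j k : ℂ) • Q j k)).trace
          = ∑ k, (α j k : ℂ) * (P i * Q j k).trace := by
        intro i
        rw [Matrix.mul_sum, trace_sum]
        apply Finset.sum_congr rfl
        intro k _
        rw [mul_smul_comm, trace_smul, smul_eq_mul]
      rw [Finset.sum_congr rfl fun i _ => hlin i]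
      exact h3 j
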